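/- Let A ∈ ℂ^{n×n} with minimal polynomial m and let q(λ) = det(λ I - A)/m(λ) (a polynomial, since m divides the characteristic polynomial). For u, v ∈ ℂ^n define p_{uv}(λ) = m(λ) · vᵀ(λ I - A)⁻¹ u (a polynomial of degree at most deg m - 1). Then for every τ ∈ ℂ, the characteristic polynomial of A + τ u vᵀ equals q(λ) · (m(λ) - τ p_{uv}(λ)). -/

import Mathlib

open Matrix Polynomial

/-- Evaluation of the characteristic polynomial. -/
lemma eval_charpoly' {N : ℕ} (M : Matrix (Fin N) (Fin N) ℂ) (z : ℂ) :
    M.charpoly.eval z = (z • (1 : Matrix (Fin N) (Fin N) ℂ) - M).det := by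
  rw [Matrix.charpoly, ← Polynomial.coe_evalRingHom, RingHom.map_det]
  congr 1
  ext i j
  by_cases h : i = j <;>
    simp [charmatrix, Matrix.one_apply, h, Matrix.smul_apply]

/-- The characteristic polynomial of A + τ u vᵀ equals q·(m - τ p_{uv}), where m is the
minimal polynomial of A, q = charpoly(A)/m, and p_{uv} is the polynomial extension of
m(λ)·vᵀ(λI - A)⁻¹u. -/
theorem stmt_10 (n : ℕ) (A : Matrix (Fin n) (Fin n) ℂ) (u v : Fin n → ℂ) (τ : ℂ)
    (q p : Polynomial ℂ)
    (hq : A.charpoly = q * minpoly ℂ A)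
    (hpdeg : p.natDegree ≤ (minpoly ℂ A).natDegree - 1)
    (hp : ∀ z : ℂ, z ∉ spectrum ℂ A →
      p.eval z = (minpoly ℂ A).eval z *
        (v ⬝ᵥ ((z • (1 : Matrix (Fin n) (Fin n) ℂ) - A)⁻¹ *ᵥ u))) :
    (A + τ • Matrix.vecMulVec u v).charpoly = q * (minpoly ℂ A - C τ * p) := by
  apply Polynomial.eq_of_infinite_eval_eq
  have hfin : Set.Finite (spectrum ℂ A) := by
    apply Set.Finite.subset (Polynomial.finite_setOf_isRoot A.charpoly_monic.ne_zero)
    intro z hz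
    rw [spectrum.mem_iff] at hz
    have : ¬ IsUnit ((z • (1 : Matrix (Fin n) (Fin n) ℂ) - A).det) := by
      rw [← Matrix.isUnit_iff_isUnit_det]
      rwa [Algebra.algebraMap_eq_smul_one] at hz
    simp only [Set.mem_setOf_eq, IsRoot, eval_charpoly']
    simpa [isUnit_iff_ne_zero] using this
  apply Set.Infinite.mono (s := (spectrum ℂ A)ᶜ) _ hfin.infinite_compl
  intro z hz
  have hz' : z ∉ spectrum ℂ A := hz
  have hunit : IsUnit (z • (1 : Matrix (Fin n) (Fin n) ℂ) - A) := by
    rw [spectrum.notMem_iff, Algebra.algebraMap_eq_smul_one] at hz'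
    exact hz'
  set B := z • (1 : Matrix (Fin n) (Fin n) ℂ) - A with hB
  have hdetB : IsUnit B.det := (Matrix.isUnit_iff_isUnit_det B).mp hunit
  have key : (z • (1 : Matrix (Fin n) (Fin n) ℂ) - (A + τ • Matrix.vecMulVec u v))
      = B + Matrix.replicateCol Unit (-(τ • u)) * Matrix.replicateRow Unit v := by
    rw [← Matrix.vecMulVec_eq]
    have : Matrix.vecMulVec (-(τ • u)) v = -(τ • Matrix.vecMulVec u v) := by
      ext i j
      simp [Matrix.vecMulVec_apply, mul_assoc]
    rw [this, hB]
    abel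
  have hdet := Matrix.det_add_replicateCol_mul_replicateRow (ι := Unit) hdetB (-(τ • u)) v
  simp only [Set.mem_setOf_eq]
  rw [eval_charpoly', key, hdet]
  have hrow : (1 + Matrix.replicateRow Unit v * B⁻¹ * Matrix.replicateCol Unit (-(τ • u))).det
      = 1 - τ * (v ⬝ᵥ (B⁻¹ *ᵥ u)) := by
    rw [Matrix.det_unique]
    simp only [Matrix.add_apply, Matrix.one_apply_eq]
    rw [Matrix.mul_assoc, ← Matrix.replicateCol_mulVec, Matrix.replicateRow_mul_replicateCol_apply,
      Matrix.mulVec_neg, Matrix.mulVec_smul, dotProduct_neg, dotProduct_smul, smul_eq_mul]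
    ring
  rw [hrow]
  have hdetA : B.det = A.charpoly.eval z := (eval_charpoly' A z).symm
  rw [hdetA, hq]
  simp only [eval_mul, eval_sub, eval_mul, eval_C, hp z hz']
  ring
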